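/- Let n, p_I, p_J be positive integers, let V_I ∈ ℝ^{n×p_I} and V_J ∈ ℝ^{n×p_J} be real matrices such that the Gram matrices V_II := V_I⊤V_I and V_JJ := V_J⊤V_J are positive definite, and let ρ ≥ 0. Then the symmetric block matrix G(ρ) := [[(1+ρ)V_II, −ρ·V_IJ],[−ρ·V_JI, (1+ρ)V_JJ]] of size (p_I+p_J)×(p_I+p_J) is positive definite; in particular it is invertible. -/

import Mathlib

open Matrix

lemma smul_posSemidef_aux {m : Type*} [Fintype m] {M : Matrix m m ℝ}
    (hM : M.PosSemidef) {ρ : ℝ} (hρ : 0 ≤ ρ) : (ρ • M).PosSemidef := by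
  refine posSemidef_iff_dotProduct_mulVec.mpr ⟨?_, fun x => ?_⟩
  · unfold Matrix.IsHermitian
    rw [conjTranspose_smul, hM.1.eq]
    simp
  · rw [smul_mulVec, dotProduct_smul, smul_eq_mul]
    exact mul_nonneg hρ (hM.dotProduct_mulVec_nonneg x)

lemma fromBlocks_diag_posDef {m p : Type*} [Fintype m] [Fintype p] [DecidableEq m]
    [DecidableEq p] {A : Matrix m m ℝ} {D : Matrix p p ℝ}
    (hA : A.PosDef) (hD : D.PosDef) : (fromBlocks A 0 0 D).PosDef := by
  refine posDef_iff_dotProduct_mulVec.mpr ⟨?_, fun x hx => ?_⟩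
  · unfold Matrix.IsHermitian
    rw [fromBlocks_conjTranspose, hA.1.eq, hD.1.eq, conjTranspose_zero]
    simp
  · have hxe : x = Sum.elim (x ∘ Sum.inl) (x ∘ Sum.inr) := (Sum.elim_comp_inl_inr x).symm
    set u := x ∘ Sum.inl with hu
    set v := x ∘ Sum.inr with hv
    rw [hxe, Function.star_sumElim, fromBlocks_mulVec, sumElim_dotProduct_sumElim]
    simp only [zero_mulVec, add_zero, zero_add, Sum.elim_comp_inl, Sum.elim_comp_inr]
    have huv : u ≠ 0 ∨ v ≠ 0 := by
      by_contra h
      push_neg at h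
      apply hx
      rw [hxe, h.1, h.2]
      ext i; cases i <;> simp
    rcases huv with h | h
    · have h1 := hA.dotProduct_mulVec_pos h
      have h2 := hD.posSemidef.dotProduct_mulVec_nonneg v
      linarith
    · have h1 := hA.posSemidef.dotProduct_mulVec_nonneg u
      have h2 := hD.dotProduct_mulVec_pos h
      linarith

/-- For `V_I ∈ ℝ^{n×p_I}`, `V_J ∈ ℝ^{n×p_J}` with positive definite Gram
matrices `V_II = V_Iᵀ V_I` and `V_JJ = V_Jᵀ V_J`, and `ρ ≥ 0`, the block matrix
`G(ρ) = [[(1+ρ)V_II, −ρ V_IJ], [−ρ V_JI, (1+ρ)V_JJ]]` is positive definite, and in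
particular invertible. -/
theorem blockMatrix_posDef_of_posDef_gram
    (n pI pJ : ℕ) (hn : 0 < n) (hpI : 0 < pI) (hpJ : 0 < pJ)
    (VI : Matrix (Fin n) (Fin pI) ℝ) (VJ : Matrix (Fin n) (Fin pJ) ℝ)
    (hI : (VIᵀ * VI).PosDef) (hJ : (VJᵀ * VJ).PosDef)
    (ρ : ℝ) (hρ : 0 ≤ ρ) :
    (Matrix.fromBlocks ((1 + ρ) • (VIᵀ * VI)) ((-ρ) • (VIᵀ * VJ))
        ((-ρ) • (VJᵀ * VI)) ((1 + ρ) • (VJᵀ * VJ))).PosDef ∧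
    IsUnit (Matrix.fromBlocks ((1 + ρ) • (VIᵀ * VI)) ((-ρ) • (VIᵀ * VJ))
        ((-ρ) • (VJᵀ * VI)) ((1 + ρ) • (VJᵀ * VJ))).det := by
  set W : Matrix (Fin n) (Fin pI ⊕ Fin pJ) ℝ := fromCols VI (-VJ) with hW
  have hWs : (Wᵀ * W).PosSemidef := by
    have := posSemidef_conjTranspose_mul_self W
    simpa using this
  have key : Matrix.fromBlocks ((1 + ρ) • (VIᵀ * VI)) ((-ρ) • (VIᵀ * VJ))
        ((-ρ) • (VJᵀ * VI)) ((1 + ρ) • (VJᵀ * VJ)) =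
      fromBlocks (VIᵀ * VI) 0 0 (VJᵀ * VJ) + ρ • (Wᵀ * W) := by
    rw [hW, transpose_fromCols, fromRows_mul_fromCols, fromBlocks_smul,
      fromBlocks_add]
    congr 1 <;> (try congr 1) <;> simp [Matrix.mul_neg, Matrix.neg_mul, add_smul] <;>
      module
  have hPD : (Matrix.fromBlocks ((1 + ρ) • (VIᵀ * VI)) ((-ρ) • (VIᵀ * VJ))
        ((-ρ) • (VJᵀ * VI)) ((1 + ρ) • (VJᵀ * VJ))).PosDef := by
    rw [key]
    exact (fromBlocks_diag_posDef hI hJ).add_posSemidef (smul_posSemidef_aux hWs hρ)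
  exact ⟨hPD, isUnit_iff_ne_zero.mpr hPD.det_pos.ne'⟩
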